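/- If a finite dataset D = {(x^k, B^k)}_{k∈K} is naively rationalizable, then it satisfies N-SARP: there is no sequence k₁,…,k_L in K with x^{k_l} ≠ x^{k_{l+1}} and x^{k_l} ∈ B^{k_{l+1}}(x_1^{k_{l+1}}) for each l (indices mod L). -/

import Mathlib

def maxSet {X : Type} (S : Set X) (pref : X → X → Prop) : Set X :=
  {x | x ∈ S ∧ ∀ y ∈ S, pref x y}

def WeakOrder {X : Type} (pref : X → X → Prop) : Prop :=
  (∀ a b, pref a b ∨ pref b a) ∧ Transitive pref

def sec1 {X₁ X₂ : Type} (B : Set (X₁ × X₂)) (a : X₁) : Set (X₁ × X₂) :=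
  {y ∈ B | y.1 = a}

def sec2 {X₁ X₂ : Type} (B : Set (X₁ × X₂)) (b : X₂) : Set (X₁ × X₂) :=
  {y ∈ B | y.2 = b}

def NSARP {K X₁ X₂ : Type} (x : K → X₁ × X₂) (B : K → Set (X₁ × X₂)) : Prop :=
  ¬ ∃ (L : ℕ) (k : Fin (L + 1) → K), ∀ l : Fin (L + 1),
      x (k l) ≠ x (k (l + 1)) ∧ x (k l) ∈ sec1 (B (k (l + 1))) (x (k (l + 1))).1

def NNSARP {K X₁ X₂ : Type} (x : K → X₁ × X₂) (B : K → Set (X₁ × X₂)) : Prop :=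
  ¬ ∃ (L : ℕ) (k : Fin (L + 1) → K), ∀ l : Fin (L + 1),
      x (k l) ≠ x (k (l + 1)) ∧ x (k l) ∈ sec2 (B (k (l + 1))) (x (k (l + 1))).2

def Cond1 {K X₁ X₂ : Type} (x : K → X₁ × X₂) (B : K → Set (X₁ × X₂)) : Prop :=
  ∀ S : Set K, S.Nonempty →
    ¬ (⋃ k ∈ S, sec1 (B k) (x k).1) ⊆ ⋃ k ∈ S, (B k \ sec1 (B k) (x k).1)

def Cond2 {K X₁ X₂ : Type} (x : K → X₁ × X₂) (B : K → Set (X₁ × X₂)) : Prop :=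
  ¬ ∃ (L : ℕ) (k : Fin (L + 1) → K), ∀ l : Fin (L + 1),
      x (k l) ≠ x (k (l + 1)) ∧ x (k l) ∈ sec1 (B (k (l + 1))) (x (k l)).1 ∧
      sec1 (B (k (l + 1))) (x (k l)).1 ⊆ sec1 (B (k l)) (x (k l)).1

def NaiveRat {K X₁ X₂ : Type} (x : K → X₁ × X₂) (B : K → Set (X₁ × X₂)) : Prop :=
  ∃ p1 p2 : X₁ × X₂ → X₁ × X₂ → Prop, WeakOrder p1 ∧ WeakOrder p2 ∧
    ∀ k, (∃ z, maxSet (B k) p1 = {z} ∧ z ∈ sec1 (B k) (x k).1) ∧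
      maxSet (sec1 (B k) (x k).1) p2 = {x k}

def NaiveNashRat {K X₁ X₂ : Type} (x : K → X₁ × X₂) (B : K → Set (X₁ × X₂)) : Prop :=
  ∃ p1 p2 : X₁ × X₂ → X₁ × X₂ → Prop, WeakOrder p1 ∧ WeakOrder p2 ∧
    ∀ k, x k ∈ maxSet (sec2 (B k) (x k).2) p1 ∧
      maxSet (sec1 (B k) (x k).1) p2 = {x k}

def StrictNaiveNashRat {K X₁ X₂ : Type} (x : K → X₁ × X₂) (B : K → Set (X₁ × X₂)) : Prop :=
  ∃ p1 p2 : X₁ × X₂ → X₁ × X₂ → Prop, WeakOrder p1 ∧ WeakOrder p2 ∧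
    ∀ k, maxSet (sec2 (B k) (x k).2) p1 = {x k} ∧
      maxSet (sec1 (B k) (x k).1) p2 = {x k}

def SophRat {K X₁ X₂ : Type} (x : K → X₁ × X₂) (B : K → Set (X₁ × X₂)) : Prop :=
  ∃ p1 p2 : X₁ × X₂ → X₁ × X₂ → Prop, WeakOrder p1 ∧ WeakOrder p2 ∧
    ∀ k, maxSet (⋃ a ∈ Prod.fst '' B k, maxSet (sec1 (B k) a) p2) p1 = {x k}

open Fin.NatCast

theorem naive_rationalizable_implies_NSARP
    {K X₁ X₂ : Type} [Fintype K]
    (x : K → X₁ × X₂) (B : K → Set (X₁ × X₂)) (hmem : ∀ k, x k ∈ B k)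
    (h : NaiveRat x B) : NSARP x B := by
  obtain ⟨p1, p2, _, ⟨htot, htrans⟩, hk⟩ := h
  -- strict preference step
  have step : ∀ (k' : K) (a : X₁ × X₂), a ∈ sec1 (B k') (x k').1 → a ≠ x k' →
      p2 (x k') a ∧ ¬ p2 a (x k') := by
    intro k' a ha hne
    have hmax := (hk k').2
    have hx : x k' ∈ maxSet (sec1 (B k') (x k').1) p2 := by
      rw [hmax]; rfl
    obtain ⟨hxmem, hxall⟩ := hx
    refine ⟨hxall a ha, fun hp => ?_⟩
    have : a ∈ maxSet (sec1 (B k') (x k').1) p2 :=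
      ⟨ha, fun y hy => htrans hp (hxall y hy)⟩
    rw [hmax] at this
    exact hne this
  rintro ⟨L, k, hc⟩
  set S : X₁ × X₂ → X₁ × X₂ → Prop := fun a b => p2 a b ∧ ¬ p2 b a with hS
  have hstep : ∀ l : Fin (L + 1), S (x (k (l + 1))) (x (k l)) := by
    intro l
    obtain ⟨hne, hmem'⟩ := hc l
    exact step (k (l + 1)) (x (k l)) hmem' hne
  have key : ∀ n : ℕ, S (x (k ((n + 1 : ℕ) : Fin (L + 1)))) (x (k 0)) := by
    intro n
    induction n with
    | zero =>
      have := hstep 0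
      simpa using this
    | succ m ih =>
      have h1 := hstep ((m + 1 : ℕ) : Fin (L + 1))
      have hcast : (((m + 1 : ℕ) : Fin (L + 1)) + 1) = ((m + 2 : ℕ) : Fin (L + 1)) := by
        push_cast; rw [add_assoc, one_add_one_eq_two]
      rw [hcast] at h1
      exact ⟨htrans h1.1 ih.1, fun hp => ih.2 (htrans hp h1.1)⟩
  have hfin : ((L + 1 : ℕ) : Fin (L + 1)) = 0 := by
    exact_mod_cast Fin.natCast_self (L + 1)
  have := key L
  rw [hfin] at this
  exact this.2 this.1
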